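/- Let X be a measurable space, n ≥ 1, and let f : Xⁿ → ℝ be measurable, bounded, nonnegative, and symmetric (invariant under every permutation of its n arguments). Then for all finite measures η, ν on X: ∫_{Xⁿ} f d((η + ν)^{⊗n}) = ∑_{k=0}^n (n choose k) ∫_{Xⁿ} f d(η^{⊗(n−k)} ⊗ ν^{⊗k}). -/

import Mathlib

open MeasureTheory

private lemma card_filter_fin_lt (n m : ℕ) (h : m ≤ n) :
    (Finset.univ.filter (fun x : Fin n => (x : ℕ) < m)).card = m := by
  have hmap : (Finset.univ.filter (fun x : Fin n => (x : ℕ) < m)).map Fin.valEmbedding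
      = Finset.range m := by
    ext a
    simp only [Finset.mem_map, Finset.mem_filter, Finset.mem_univ, true_and, Finset.mem_range,
      Fin.valEmbedding_apply]
    constructor
    · rintro ⟨x, hx, rfl⟩; exact hx
    · intro ha; exact ⟨⟨a, lt_of_lt_of_le ha h⟩, ha, rfl⟩
  rw [← Finset.card_map Fin.valEmbedding, hmap, Finset.card_range]

private lemma integral_pi_perm {X : Type*} [MeasurableSpace X] {n : ℕ}
    (f : (Fin n → X) → ℝ)
    (hsym : ∀ (σ : Equiv.Perm (Fin n)) (x : Fin n → X), f (x ∘ σ) = f x)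
    (μ : Fin n → Measure X) [∀ i, SigmaFinite (μ i)] (e : Equiv.Perm (Fin n)) :
    ∫ x, f x ∂(Measure.pi fun i => μ (e i)) = ∫ x, f x ∂(Measure.pi μ) := by
  have h := measurePreserving_piCongrLeft μ e
  rw [← h.map_eq, MeasureTheory.integral_map_equiv]
  refine integral_congr_ae (Filter.Eventually.of_forall fun x => ?_)
  have hT : (MeasurableEquiv.piCongrLeft (fun _ : Fin n => X) e) x = x ∘ ⇑e.symm := by
    funext b
    rw [MeasurableEquiv.coe_piCongrLeft]
    conv_lhs => rw [← e.apply_symm_apply b, Equiv.piCongrLeft_apply_apply]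
    rfl
  show f x = f ((MeasurableEquiv.piCongrLeft (fun _ : Fin n => X) e) x)
  rw [hT, hsym e.symm x]

theorem integral_pi_add_binomial {X : Type*} [MeasurableSpace X] (n : ℕ) (hn : 1 ≤ n)
    (C : ℝ) (f : (Fin n → X) → ℝ) (hf : Measurable f)
    (hf0 : ∀ x, 0 ≤ f x) (hfC : ∀ x, f x ≤ C)
    (hsym : ∀ (σ : Equiv.Perm (Fin n)) (x : Fin n → X), f (x ∘ σ) = f x)
    (η ν : Measure X) [IsFiniteMeasure η] [IsFiniteMeasure ν] :
    ∫ x, f x ∂(Measure.pi fun _ : Fin n => η + ν)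
      = ∑ k ∈ Finset.range (n + 1), (n.choose k : ℝ) *
          ∫ x, f x ∂(Measure.pi fun i : Fin n => if (i : ℕ) < n - k then η else ν) := by
  classical
  -- integrability of f w.r.t. any finite measure
  have hInt : ∀ (μ : Measure (Fin n → X)) [IsFiniteMeasure μ], Integrable f μ := by
    intro μ _
    refine Integrable.mono' (integrable_const C) hf.aestronglyMeasurable
      (Filter.Eventually.of_forall fun x => ?_)
    rw [Real.norm_eq_abs, abs_of_nonneg (hf0 x)]
    exact hfC x
  -- expansion of the product measure
  have hexp : (Measure.pi fun _ : Fin n => η + ν)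
      = ∑ t : Finset (Fin n), Measure.pi (fun i => if i ∈ t then ν else η) := by
    refine Measure.pi_eq (μ := fun _ : Fin n => η + ν) fun s hs => ?_
    rw [Measure.finset_sum_apply]
    have : ∀ t : Finset (Fin n),
        Measure.pi (fun i => if i ∈ t then ν else η) (Set.pi Set.univ s)
          = (∏ i ∈ t, ν (s i)) * ∏ i ∈ tᶜ, η (s i) := by
      intro t
      haveI : ∀ i : Fin n, IsFiniteMeasure ((fun i => if i ∈ t then ν else η) i) := fun i => by
        by_cases h : i ∈ t
        · simp only [if_pos h]; infer_instance
        · simp only [if_neg h]; infer_instance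
      rw [Measure.pi_pi, ← Finset.prod_mul_prod_compl t]
      congr 1
      · exact Finset.prod_congr rfl fun i hi => by rw [if_pos hi]
      · exact Finset.prod_congr rfl fun i hi => by
          rw [if_neg (Finset.mem_compl.mp hi)]
    simp_rw [this]
    rw [← Fintype.prod_add (fun i => ν (s i)) (fun i => η (s i))]
    exact Finset.prod_congr rfl fun i _ => by
      simp [Measure.add_apply, add_comm]
  have hfinm : ∀ t : Finset (Fin n), ∀ i : Fin n,
      IsFiniteMeasure ((fun i => if i ∈ t then ν else η) i) := fun t i => by
    by_cases h : i ∈ t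
    · simp only [if_pos h]; infer_instance
    · simp only [if_neg h]; infer_instance
  rw [hexp, integral_finset_sum_measure (fun t _ => by haveI := hfinm t; exact hInt _)]
  -- each term equals the sorted one
  have hterm : ∀ t : Finset (Fin n),
      ∫ x, f x ∂(Measure.pi fun i => if i ∈ t then ν else η)
        = ∫ x, f x ∂(Measure.pi fun i : Fin n => if (i : ℕ) < n - t.card then η else ν) := by
    intro t
    set k := t.card with hk
    have hkn : k ≤ n := by
      simpa using Finset.card_le_card (Finset.subset_univ t)
    set μ : Fin n → Measure X := fun i => if (i : ℕ) < n - k then η else ν with hμ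
    -- cardinalities
    have hc1 : Fintype.card {x : Fin n // x ∈ t}
        = Fintype.card {x : Fin n // ¬ (x : ℕ) < n - k} := by
      rw [Fintype.card_coe, Fintype.card_subtype]
      have := card_filter_fin_lt n (n - k) (Nat.sub_le n k)
      have h2 : (Finset.univ.filter (fun x : Fin n => ¬ (x : ℕ) < n - k)).card
          = n - (n - k) := by
        rw [Finset.filter_not, Finset.card_sdiff_of_subset (Finset.filter_subset _ _),
          Finset.card_univ, Fintype.card_fin, this]
      rw [h2, Nat.sub_sub_self hkn]
    have hc2 : Fintype.card {x : Fin n // ¬ x ∈ t}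
        = Fintype.card {x : Fin n // ¬ ¬ (x : ℕ) < n - k} := by
      rw [Fintype.card_subtype, Fintype.card_subtype]
      have h1 : (Finset.univ.filter (fun x : Fin n => ¬ x ∈ t)).card = n - k := by
        rw [Finset.filter_not, Finset.card_sdiff_of_subset, Finset.card_univ, Fintype.card_fin]
        · congr 1
          rw [Finset.filter_mem_eq_inter, Finset.univ_inter]
        · intro x hx; exact Finset.mem_univ x
      have h2 : (Finset.univ.filter (fun x : Fin n => ¬ ¬ (x : ℕ) < n - k)).card = n - k := by
        simp only [not_not]
        exact card_filter_fin_lt n (n - k) (Nat.sub_le n k)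
      rw [h1, h2]
    set e : Equiv.Perm (Fin n) :=
      Equiv.subtypeCongr (Fintype.equivOfCardEq hc1) (Fintype.equivOfCardEq hc2) with he
    have hcompat : ∀ i : Fin n, (if i ∈ t then ν else η) = μ (e i) := by
      intro i
      by_cases hi : i ∈ t
      · have : ¬ ((e i : Fin n) : ℕ) < n - k := by
          have : e i = ((Fintype.equivOfCardEq hc1) ⟨i, hi⟩ : Fin n) := by
            simp [he, Equiv.subtypeCongr, hi]
          rw [this]
          exact ((Fintype.equivOfCardEq hc1) ⟨i, hi⟩).2
        rw [if_pos hi, hμ]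
        simp [this]
      · have : ¬ ¬ ((e i : Fin n) : ℕ) < n - k := by
          have : e i = ((Fintype.equivOfCardEq hc2) ⟨i, hi⟩ : Fin n) := by
            simp [he, Equiv.subtypeCongr, hi]
          rw [this]
          exact ((Fintype.equivOfCardEq hc2) ⟨i, hi⟩).2
        rw [if_neg hi, hμ]
        rw [not_not] at this
        simp [this]
    have : (fun i => if i ∈ t then ν else η) = fun i => μ (e i) := funext hcompat
    rw [this]
    haveI : ∀ i, SigmaFinite (μ i) := fun i => by
      simp only [hμ]
      by_cases h : (i : ℕ) < n - k
      · simp only [if_pos h]; infer_instance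
      · simp only [if_neg h]; infer_instance
    exact integral_pi_perm f hsym μ e
  simp_rw [hterm]
  -- group by cardinality
  rw [← Finset.powerset_univ, Finset.powerset_card_disjiUnion]
  erw [Finset.sum_disjiUnion]
  rw [Finset.card_univ, Fintype.card_fin]
  refine Finset.sum_congr rfl fun k hk => ?_
  rw [Finset.sum_congr rfl (fun t ht => by
    rw [(Finset.mem_powersetCard.mp ht).2]), Finset.sum_const,
    Finset.card_powersetCard, Finset.card_univ, Fintype.card_fin, nsmul_eq_mul]
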